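/- If the serialized judgment G | L ⊢ ser(C) ⇒ L'' is derivable for some L'', then necessarily L'' = L (serialization is net-neutral on free locations). -/
import Mathlib

/-- Commands of the command-sequence language. -/
inductive Cmd : Type where
  | alloc : ℕ → Cmd
  | free : ℕ → Cmd
  | conn : ℕ → ℕ → Cmd
  | branch : List Cmd → List Cmd → Cmd
  | loop : List Cmd → Cmd


abbrev Cmds := List Cmd

/-- A path in `G` from `l₁` to `l₂` whose intermediate vertices all lie in `L`. -/
def HasPath (G : SimpleGraph ℕ) (l₁ l₂ : ℕ) (L : Finset ℕ) : Prop :=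
  ∃ p : G.Walk l₁ l₂, ∀ v ∈ p.support, v = l₁ ∨ v = l₂ ∨ v ∈ L

/-- The judgment `G | L ⊢ C ⇒ L'`, parameterized by the path condition `P`. -/
inductive Judg (P : ℕ → ℕ → Finset ℕ → Prop) : Finset ℕ → Cmds → Finset ℕ → Prop where
  | empty (L) : Judg P L [] L
  | alloc {L C L' l} : l ∈ L → Judg P (L.erase l) C L' →
      Judg P L (Cmd.alloc l :: C) L'
  | free {L C L' l} : l ∉ L → Judg P (insert l L) C L' →
      Judg P L (Cmd.free l :: C) L'
  | conn {L C L' l₁ l₂} : P l₁ l₂ L → Judg P L C L' →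
      Judg P L (Cmd.conn l₁ l₂ :: C) L'
  | branch {L C₁ C₂ C L'' L'} : Judg P L C₁ L'' → Judg P L C₂ L'' → Judg P L'' C L' →
      Judg P L (Cmd.branch C₁ C₂ :: C) L'
  | loop {L C₁ C L'} : Judg P L C₁ L → Judg P L C L' →
      Judg P L (Cmd.loop C₁ :: C) L'

mutual
/-- Size of a single command. -/
def csize : Cmd → ℕ
  | .alloc _ => 1
  | .free _ => 1
  | .conn _ _ => 1
  | .branch C₁ C₂ => 1 + size C₁ + size C₂
  | .loop C₁ => 1 + size C₁
/-- Size measure on command sequences. -/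
def size : Cmds → ℕ
  | [] => 0
  | c :: C => csize c + size C
end

theorem size_append_aux (C₁ C₂ : Cmds) : size (C₁ ++ C₂) = size C₁ + size C₂ := by
  induction C₁ with
  | nil => simp [size]
  | cons c C ih => simp [size, ih]; omega

/-- Serialization of command sequences. -/
def ser : Cmds → Cmds
  | [] => []
  | .conn l₁ l₂ :: C => .conn l₁ l₂ :: ser C
  | .alloc l :: C => .alloc l :: (ser C ++ [.free l])
  | .free l :: C => .free l :: (ser C ++ [.alloc l])
  | .branch C₁ C₂ :: C₃ => ser C₁ ++ ser (C₂ ++ C₃)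
  | .loop C₁ :: C₂ => ser (C₁ ++ C₂)
termination_by C => size C
decreasing_by
  all_goals simp [size, csize, size_append_aux]
  all_goals omega

theorem judg_split {P : ℕ → ℕ → Finset ℕ → Prop} : ∀ {A : Cmds} {L L' : Finset ℕ} (B : Cmds),
    Judg P L (A ++ B) L' → ∃ M, Judg P L A M ∧ Judg P M B L' := by
  intro A
  induction A with
  | nil => intro L L' B h; exact ⟨L, Judg.empty _, h⟩
  | cons c A ih =>
    intro L L' B h
    cases h with
    | alloc hl h => obtain ⟨M, h1, h2⟩ := ih B h; exact ⟨M, Judg.alloc hl h1, h2⟩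
    | free hl h => obtain ⟨M, h1, h2⟩ := ih B h; exact ⟨M, Judg.free hl h1, h2⟩
    | conn hp h => obtain ⟨M, h1, h2⟩ := ih B h; exact ⟨M, Judg.conn hp h1, h2⟩
    | branch h1 h2 h3 => obtain ⟨M, ha, hb⟩ := ih B h3; exact ⟨M, Judg.branch h1 h2 ha, hb⟩
    | loop h1 h2 => obtain ⟨M, ha, hb⟩ := ih B h2; exact ⟨M, Judg.loop h1 ha, hb⟩

theorem ser_neutral {P : ℕ → ℕ → Finset ℕ → Prop} :
    ∀ (C : Cmds) {L L'' : Finset ℕ}, Judg P L (ser C) L'' → L'' = L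
  | [], L, L'', h => by rw [ser] at h; cases h; rfl
  | .conn l₁ l₂ :: C, L, L'', h => by
      rw [ser] at h
      cases h with
      | conn hp h => exact ser_neutral C h
  | .alloc l :: C, L, L'', h => by
      rw [ser] at h
      cases h with
      | alloc hl h =>
        obtain ⟨M, h1, h2⟩ := judg_split _ h
        have hM := ser_neutral C h1
        subst hM
        cases h2 with
        | free hl2 h2 =>
          cases h2
          rw [Finset.insert_erase hl]
  | .free l :: C, L, L'', h => by
      rw [ser] at h
      cases h with
      | free hl h =>
        obtain ⟨M, h1, h2⟩ := judg_split _ h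
        have hM := ser_neutral C h1
        subst hM
        cases h2 with
        | alloc hl2 h2 =>
          cases h2
          rw [Finset.erase_insert hl]
  | .branch C₁ C₂ :: C₃, L, L'', h => by
      rw [ser] at h
      obtain ⟨M, h1, h2⟩ := judg_split _ h
      have hM := ser_neutral C₁ h1
      subst hM
      exact ser_neutral (C₂ ++ C₃) h2
  | .loop C₁ :: C₂, L, L'', h => by
      rw [ser] at h
      exact ser_neutral (C₁ ++ C₂) h
termination_by C => size C
decreasing_by
  all_goals simp [size, csize, size_append_aux]
  all_goals omega

/-- serialization is net-neutral on free locations. -/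
theorem ser_output_eq (G : SimpleGraph ℕ) (L L'' : Finset ℕ) (C : Cmds)
    (h : Judg (HasPath G) L (ser C) L'') : L'' = L :=
  ser_neutral C h
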